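/- arXiv:2206.08205 — 6 statements merged into one kernel-verified Lean document; each statement's English description precedes it below -/
import Mathlib

section
/- Under the standing assumptions (φ concave vanishing at 0 with positive right derivative at 0, ψ as in Assumption 1.1, A full row rank, σ not an integer multiple of sup φ), the Mangasarian-Fromovitz constraint qualification holds for the constraint ∑_{i=1}^m φ((b_i - a_iᵀx)²) ≤ σ: whenever x satisfies the constraint with equality, the gradient vector ∑_{i=1}^m φ'₊((b_i - a_iᵀx)²)(b_i - a_iᵀx) a_i is nonzero. -/
/-- If a concave function on `Ici 0` has derivative `0` at some `t₀ > 0` and is monotone,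
then `t₀` is a global max on `Ici 0`. -/
lemma max_of_deriv_zero {φ : ℝ → ℝ} (hconc : ConcaveOn ℝ (Set.Ici 0) φ)
    (hmono : MonotoneOn φ (Set.Ici 0)) {t₀ : ℝ} (ht₀ : 0 < t₀)
    (hd : HasDerivAt φ 0 t₀) : ∀ t ∈ Set.Ici (0:ℝ), φ t ≤ φ t₀ := by
  intro t ht
  rcases le_or_gt t t₀ with h | h
  · exact hmono ht (le_of_lt ht₀) h
  · have hs : slope φ t₀ t ≤ 0 :=
      hconc.slope_le_of_hasDerivAt (le_of_lt ht₀) (le_trans (le_of_lt ht₀) (le_of_lt h)) h hd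
    have hpos : 0 < t - t₀ := by linarith
    have : φ t - φ t₀ ≤ 0 := by
      have := mul_nonpos_of_nonpos_of_nonneg hs (le_of_lt hpos)
      rwa [slope_def_field, div_mul_cancel₀] at this
      exact ne_of_gt hpos
    linarith

/-- Proposition 2.1(ii): under the standing assumptions, the MFCQ holds:
whenever `x` satisfies the constraint `∑ φ((b i - aᵢᵀx)²) ≤ σ` with equality, the gradient
vector `∑ i, φ'₊((b i - aᵢᵀx)²) (b i - aᵢᵀx) • a i` is nonzero.
Here `D` is the right derivative of `φ`, with `D t = φ'(t)` for `t > 0` and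
`D 0 = lim_{t↓0} φ'(t) ∈ (0,∞)`. -/
theorem mfcq_holds
    (m n : ℕ) (φ D : ℝ → ℝ)
    (a : Fin m → Fin n → ℝ) (b : Fin m → ℝ) (σ : ℝ)
    (hcont : ContinuousOn φ (Set.Ici 0))
    (hconc : ConcaveOn ℝ (Set.Ici 0) φ)
    (h0 : φ 0 = 0)
    (hnonneg : ∀ t ∈ Set.Ici (0:ℝ), 0 ≤ φ t)
    (hderiv : ∀ t ∈ Set.Ioi (0:ℝ), HasDerivAt φ (D t) t)
    (hDnonneg : ∀ t ∈ Set.Ici (0:ℝ), 0 ≤ D t)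
    (hD0 : 0 < D 0)
    (hlim : Filter.Tendsto D (nhdsWithin 0 (Set.Ioi 0)) (nhds (D 0)))
    (hrank : LinearIndependent ℝ a)
    (hσpos : 0 < σ) (hσlt : σ < ∑ i, φ (b i ^ 2))
    (hnotmul : ∀ k : ℕ, 1 ≤ k → k ≤ m →
      (σ : EReal) ≠ ((k : ℝ) : EReal) * (⨆ t : Set.Ici (0:ℝ), ((φ t : ℝ) : EReal))) :
    ∀ x : Fin n → ℝ,
      (∑ i, φ ((b i - ∑ j, a i j * x j) ^ 2) = σ) →
      (fun j => ∑ i, D ((b i - ∑ j', a i j' * x j') ^ 2)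
          * (b i - ∑ j', a i j' * x j') * a i j) ≠ (0 : Fin n → ℝ) := by
  -- monotonicity of φ
  have hmono : MonotoneOn φ (Set.Ici 0) := by
    apply monotoneOn_of_deriv_nonneg (convex_Ici 0) hcont
    · intro t ht
      rw [interior_Ici] at ht
      exact (hderiv t ht).differentiableAt.differentiableWithinAt
    · intro t ht
      rw [interior_Ici] at ht
      rw [(hderiv t ht).deriv]
      exact hDnonneg t (Set.mem_Ici.mpr (le_of_lt (Set.mem_Ioi.mp ht)))
  intro x hx hgrad
  set r : Fin m → ℝ := fun i => b i - ∑ j', a i j' * x j' with hr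
  set c : Fin m → ℝ := fun i => D (r i ^ 2) * r i with hc
  -- the coefficients vanish by linear independence
  have hcoef : ∀ i, c i = 0 := by
    have hsum : (∑ i, c i • a i) = 0 := by
      funext j
      have := congrFun hgrad j
      simpa [Finset.sum_apply, smul_eq_mul] using this
    exact Fintype.linearIndependent_iff.mp hrank c hsum
  -- the set of indices with nonzero residual
  set s : Finset (Fin m) := Finset.univ.filter (fun i => r i ≠ 0) with hs
  have hsum_s : σ = ∑ i ∈ s, φ (r i ^ 2) := by
    rw [← hx]
    refine (Finset.sum_subset (Finset.subset_univ s) ?_).symm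
    intro i _ hi
    have : r i = 0 := not_not.mp fun h => hi (Finset.mem_filter.mpr ⟨Finset.mem_univ i, h⟩)
    show φ (r i ^ 2) = 0
    rw [this]
    norm_num [h0]
  -- s is nonempty
  have hsne : s.Nonempty := by
    by_contra hne
    rw [Finset.not_nonempty_iff_eq_empty] at hne
    rw [hne, Finset.sum_empty] at hsum_s
    exact absurd hsum_s (ne_of_gt hσpos)
  -- every i ∈ s attains the supremum
  have hmax : ∀ i ∈ s, ∀ t ∈ Set.Ici (0:ℝ), φ t ≤ φ (r i ^ 2) := by
    intro i hi
    have hri : r i ≠ 0 := by simpa [hs] using hi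
    have hpos : 0 < r i ^ 2 := by positivity
    have hD0' : D (r i ^ 2) = 0 := by
      have := hcoef i
      rcases mul_eq_zero.mp this with h | h
      · exact h
      · exact absurd h hri
    have := hderiv (r i ^ 2) hpos
    rw [hD0'] at this
    exact max_of_deriv_zero hconc hmono hpos this
  -- hence in EReal all these values equal the supremum
  have hsup : ∀ i ∈ s, ((φ (r i ^ 2) : ℝ) : EReal)
      = (⨆ t : Set.Ici (0:ℝ), ((φ t : ℝ) : EReal)) := by
    intro i hi
    apply le_antisymm
    · exact le_iSup (fun t : Set.Ici (0:ℝ) => ((φ t : ℝ) : EReal))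
        ⟨r i ^ 2, Set.mem_Ici.mpr (sq_nonneg _)⟩
    · apply iSup_le
      intro t
      exact_mod_cast hmax i hi t t.2
  obtain ⟨i₀, hi₀⟩ := hsne
  -- all values in s are equal to φ (r i₀ ^ 2)
  have hval : ∀ i ∈ s, φ (r i ^ 2) = φ (r i₀ ^ 2) := by
    intro i hi
    have := (hsup i hi).trans (hsup i₀ hi₀).symm
    exact_mod_cast this
  have hσeq : σ = (s.card : ℝ) * φ (r i₀ ^ 2) := by
    rw [hsum_s, Finset.sum_congr rfl hval, Finset.sum_const, nsmul_eq_mul]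
  -- contradiction with hnotmul
  refine hnotmul s.card (Finset.card_pos.mpr ⟨i₀, hi₀⟩)
    (by simpa using s.card_le_univ) ?_
  rw [← hsup i₀ hi₀, hσeq]
  exact_mod_cast rfl
end

section
/- If x* is a local minimizer of minimizing ∑_{i=1}^n ψ(|x_i|) subject to ∑_{i=1}^m φ((b_i - a_iᵀx)²) ≤ σ, and the MFCQ holds at x*, then there exists λ ≥ 0 such that λ(∑φ((b_i-a_iᵀx*)²) - σ) = 0 and 0 ∈ Ψ'₊(|x*|) ∘ ∂‖x*‖₁ - 2λ ∑_{i=1}^m φ'₊((b_i-a_iᵀx*)²)(b_i-a_iᵀx*) a_i. -/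
open Filter Set Topology

set_option maxHeartbeats 2000000

lemma concave_tangent_line {φ Dφ : ℝ → ℝ}
    (hconc : ConcaveOn ℝ (Set.Ici 0) φ)
    (hderiv : ∀ t ∈ Set.Ici (0:ℝ), HasDerivWithinAt φ (Dφ t) (Set.Ici t) t)
    {u s : ℝ} (hu : 0 ≤ u) (hs : 0 ≤ s) :
    φ s ≤ φ u + Dφ u * (s - u) := by
  have hslope : Tendsto (slope φ u) (𝓝[>] u) (𝓝 (Dφ u)) := by
    have := (hasDerivWithinAt_iff_tendsto_slope).1 (hderiv u hu)
    rwa [Set.Ici_sdiff_left] at this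
  rcases lt_trichotomy s u with h | h | h
  · have key : Dφ u ≤ (φ u - φ s) / (u - s) := by
      refine le_of_tendsto hslope ?_
      filter_upwards [self_mem_nhdsWithin] with t (ht : u < t)
      have h2 := hconc.slope_anti_adjacent hs (le_of_lt (lt_of_le_of_lt hu ht) : (0:ℝ) ≤ t) h ht
      calc slope φ u t = (φ t - φ u) / (t - u) := by rw [slope_def_field]
        _ ≤ (φ u - φ s) / (u - s) := h2
    have husd : 0 < u - s := by linarith
    rw [le_div_iff₀ husd] at key
    nlinarith
  · simp [h]
  · have key : (φ s - φ u) / (s - u) ≤ Dφ u := by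
      refine ge_of_tendsto hslope ?_
      filter_upwards [self_mem_nhdsWithin, Ioo_mem_nhdsGT_of_mem ⟨le_refl u, h⟩]
        with t (ht : u < t) ht2
      have hts : t < s := ht2.2
      have h2 := hconc.slope_anti_adjacent hu hs ht hts
      have e1 := (div_le_div_iff₀ (by linarith : (0:ℝ) < s - t) (by linarith : (0:ℝ) < t - u)).1 h2
      have : (φ s - φ u) / (s - u) ≤ (φ t - φ u) / (t - u) := by
        rw [div_le_div_iff₀ (by linarith) (by linarith)]
        nlinarith
      calc (φ s - φ u) / (s - u) ≤ (φ t - φ u) / (t - u) := this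
        _ = slope φ u t := (slope_def_field φ u t).symm
    have husd : 0 < s - u := by linarith
    rw [div_le_iff₀ husd] at key
    nlinarith

/-- Proposition 2.2: if `xs` is a local minimizer of
`min ∑ ψ(|x i|) s.t. ∑ φ((b i - aᵢᵀx)²) ≤ σ` and the MFCQ holds at `xs`, then there is a
multiplier `lam ≥ 0` with complementary slackness and
`0 ∈ Ψ'₊(|xs|) ∘ ∂‖xs‖₁ - 2 lam ∑ i φ'₊((b i - aᵢᵀxs)²)(b i - aᵢᵀxs) a i`.
`Dψ`/`Dφ` denote the (right) derivatives of `ψ`/`φ`, and the subdifferential of the ℓ₁-norm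
is expressed via its defining inequality. -/
theorem kkt_at_local_min
    (m n : ℕ) (ψ Dψ φ Dφ : ℝ → ℝ)
    (a : Fin m → Fin n → ℝ) (b : Fin m → ℝ) (σ : ℝ) (xs : Fin n → ℝ)
    -- Assumption 1.1(i) on ψ
    (hψcont : ContinuousOn ψ (Set.Ici 0))
    (hψconc : StrictConcaveOn ℝ (Set.Ici 0) ψ)
    (hψ0 : ψ 0 = 0)
    (hψnonneg : ∀ t ∈ Set.Ici (0:ℝ), 0 ≤ ψ t)
    (hψtop : Filter.Tendsto ψ Filter.atTop Filter.atTop)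
    (hψderiv : ∀ t ∈ Set.Ici (0:ℝ), HasDerivWithinAt ψ (Dψ t) (Set.Ici t) t)
    (hψpos : ∀ t ∈ Set.Ici (0:ℝ), 0 < Dψ t)
    -- Assumption 1.1(ii) on φ
    (hφcont : ContinuousOn φ (Set.Ici 0))
    (hφconc : ConcaveOn ℝ (Set.Ici 0) φ)
    (hφ0 : φ 0 = 0)
    (hφnonneg : ∀ t ∈ Set.Ici (0:ℝ), 0 ≤ φ t)
    (hφderiv : ∀ t ∈ Set.Ici (0:ℝ), HasDerivWithinAt φ (Dφ t) (Set.Ici t) t)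
    (hφpos : ∀ t ∈ Set.Ici (0:ℝ), 0 ≤ Dφ t)
    (hφ00 : 0 < Dφ 0)
    -- full row rank and σ range
    (hrank : LinearIndependent ℝ a)
    (hσpos : 0 < σ) (hσlt : σ < ∑ i, φ (b i ^ 2))
    -- xs is a feasible local minimizer
    (hfeas : ∑ i, φ ((b i - ∑ j, a i j * xs j) ^ 2) ≤ σ)
    (hmin : IsLocalMinOn (fun x : Fin n → ℝ => ∑ i, ψ |x i|)
      {x : Fin n → ℝ | ∑ i, φ ((b i - ∑ j, a i j * x j) ^ 2) ≤ σ} xs)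
    -- MFCQ at xs
    (hmfcq : (∑ i, φ ((b i - ∑ j, a i j * xs j) ^ 2) = σ) →
      (fun j => ∑ i, Dφ ((b i - ∑ j', a i j' * xs j') ^ 2)
          * (b i - ∑ j', a i j' * xs j') * a i j) ≠ (0 : Fin n → ℝ)) :
    ∃ lam : ℝ, 0 ≤ lam ∧
      lam * ((∑ i, φ ((b i - ∑ j, a i j * xs j) ^ 2)) - σ) = 0 ∧
      ∃ g : Fin n → ℝ,
        (∀ y : Fin n → ℝ, (∑ i, |xs i|) + ∑ i, g i * (y i - xs i) ≤ ∑ i, |y i|) ∧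
        ∀ j, Dψ |xs j| * g j
            - 2 * lam * ∑ i, Dφ ((b i - ∑ j', a i j' * xs j') ^ 2)
                * (b i - ∑ j', a i j' * xs j') * a i j = 0 := by
  classical
  obtain ⟨r, hr⟩ : ∃ r : Fin m → ℝ, r = fun i => b i - ∑ j, a i j * xs j := ⟨_, rfl⟩
  obtain ⟨v, hv⟩ : ∃ v : Fin n → ℝ, v = fun j => ∑ i, Dφ (r i ^ 2) * r i * a i j := ⟨_, rfl⟩
  obtain ⟨sg, hsg⟩ : ∃ sg : Fin n → ℝ, sg = fun j => if 0 < xs j then (1:ℝ) else -1 := ⟨_, rfl⟩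
  obtain ⟨h, hh⟩ : ∃ h : (Fin n → ℝ) → ℝ,
      h = fun d => ∑ j, Dψ |xs j| * (if xs j = 0 then |d j| else sg j * d j) := ⟨_, rfl⟩
  have hDψ : ∀ j : Fin n, 0 < Dψ |xs j| := fun j => hψpos _ (Set.mem_Ici.mpr (abs_nonneg _))
  have hsg1 : ∀ j, sg j = 1 ∨ sg j = -1 := by
    intro j; rw [hsg]; by_cases h0 : 0 < xs j <;> simp [h0]
  have hsgmul : ∀ j, sg j * sg j = 1 := by
    intro j; rcases hsg1 j with e | e <;> rw [e] <;> norm_num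
  have hsgabs : ∀ j, xs j ≠ 0 → sg j * xs j = |xs j| := by
    intro j hj
    simp only [hsg]
    by_cases h0 : 0 < xs j
    · rw [if_pos h0, abs_of_pos h0, one_mul]
    · have hlt : xs j < 0 := lt_of_le_of_ne (not_lt.1 h0) hj
      rw [if_neg h0, abs_of_neg hlt]; ring
  have hfeasr : (∑ i, φ (r i ^ 2)) ≤ σ := by simpa only [hr] using hfeas
  -- xs ≠ 0
  have hxs0 : ∃ j₀ : Fin n, xs j₀ ≠ 0 := by
    by_contra hc
    push_neg at hc
    have he : (∑ i, φ ((b i - ∑ j, a i j * xs j) ^ 2)) = ∑ i, φ (b i ^ 2) := by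
      apply Finset.sum_congr rfl
      intro i _
      simp [hc]
    rw [he] at hfeas
    linarith
  obtain ⟨j₀, hj₀⟩ := hxs0
  -- tangent line bounds
  have htanφ : ∀ u s : ℝ, 0 ≤ u → 0 ≤ s → φ s ≤ φ u + Dφ u * (s - u) :=
    fun u s hu hs => concave_tangent_line hφconc hφderiv hu hs
  have htanψ : ∀ u s : ℝ, 0 ≤ u → 0 ≤ s → ψ s ≤ ψ u + Dψ u * (s - u) :=
    fun u s hu hs => concave_tangent_line hψconc.concaveOn hψderiv hu hs
  -- constraint upper bound
  have hcb : ∀ (d : Fin n → ℝ) (t : ℝ), 0 ≤ t →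
      (∑ i, φ ((b i - ∑ j, a i j * (xs j + t * d j)) ^ 2)) ≤
        (∑ i, φ (r i ^ 2)) - 2 * t * (∑ j, v j * d j)
          + t ^ 2 * ∑ i, Dφ (r i ^ 2) * (∑ j, a i j * d j) ^ 2 := by
    intro d t ht
    have key : ∀ i : Fin m, φ ((b i - ∑ j, a i j * (xs j + t * d j)) ^ 2) ≤
        φ (r i ^ 2) + ((-(2 * t)) * (Dφ (r i ^ 2) * r i * (∑ j, a i j * d j))
          + t ^ 2 * (Dφ (r i ^ 2) * (∑ j, a i j * d j) ^ 2)) := by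
      intro i
      have hexp : b i - ∑ j, a i j * (xs j + t * d j) = r i - t * ∑ j, a i j * d j := by
        rw [hr]
        have he : ∑ j, a i j * (xs j + t * d j)
            = (∑ j, a i j * xs j) + t * ∑ j, a i j * d j := by
          rw [Finset.mul_sum, ← Finset.sum_add_distrib]
          apply Finset.sum_congr rfl
          intro j _; ring
        rw [he]; ring
      rw [hexp]
      have h1 := htanφ (r i ^ 2) ((r i - t * ∑ j, a i j * d j) ^ 2) (sq_nonneg _) (sq_nonneg _)
      nlinarith [h1]
    calc (∑ i, φ ((b i - ∑ j, a i j * (xs j + t * d j)) ^ 2))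
        ≤ ∑ i, (φ (r i ^ 2) + ((-(2 * t)) * (Dφ (r i ^ 2) * r i * (∑ j, a i j * d j))
          + t ^ 2 * (Dφ (r i ^ 2) * (∑ j, a i j * d j) ^ 2))) :=
          Finset.sum_le_sum fun i _ => key i
      _ = (∑ i, φ (r i ^ 2)) + ((-(2 * t)) * (∑ i, Dφ (r i ^ 2) * r i * (∑ j, a i j * d j))
          + t ^ 2 * (∑ i, Dφ (r i ^ 2) * (∑ j, a i j * d j) ^ 2)) := by
          rw [Finset.sum_add_distrib, Finset.sum_add_distrib, ← Finset.mul_sum, ← Finset.mul_sum]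
      _ = (∑ i, φ (r i ^ 2)) - 2 * t * (∑ j, v j * d j)
          + t ^ 2 * ∑ i, Dφ (r i ^ 2) * (∑ j, a i j * d j) ^ 2 := by
          have hswap : (∑ i, Dφ (r i ^ 2) * r i * (∑ j, a i j * d j)) = ∑ j, v j * d j := by
            calc (∑ i, Dφ (r i ^ 2) * r i * (∑ j, a i j * d j))
                = ∑ i, ∑ j, (Dφ (r i ^ 2) * r i * a i j) * d j := by
                  apply Finset.sum_congr rfl
                  intro i _
                  rw [Finset.mul_sum]
                  apply Finset.sum_congr rfl
                  intro j _; ring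
              _ = ∑ j, ∑ i, (Dφ (r i ^ 2) * r i * a i j) * d j := Finset.sum_comm
              _ = ∑ j, v j * d j := by
                  apply Finset.sum_congr rfl
                  intro j _
                  rw [hv, ← Finset.sum_mul]
          rw [hswap]; ring
  -- objective upper bound
  have hfb : ∀ (d : Fin n → ℝ) (t : ℝ), 0 ≤ t → (∀ j, xs j ≠ 0 → t * |d j| < |xs j|) →
      (∑ j, ψ |xs j + t * d j|) ≤ (∑ j, ψ |xs j|) + t * h d := by
    intro d t ht hsmall
    have key : ∀ j : Fin n, ψ |xs j + t * d j|
        ≤ ψ |xs j| + t * (Dψ |xs j| * (if xs j = 0 then |d j| else sg j * d j)) := by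
      intro j
      have habs : |xs j + t * d j| = |xs j| + t * (if xs j = 0 then |d j| else sg j * d j) := by
        by_cases hj : xs j = 0
        · rw [if_pos hj, hj]
          simp [abs_mul, abs_of_nonneg ht]
        · rw [if_neg hj]
          have hb := hsmall j hj
          have hd1 : t * d j ≤ t * |d j| := mul_le_mul_of_nonneg_left (le_abs_self _) ht
          have hd2 : -(t * |d j|) ≤ t * d j := by
            have := mul_le_mul_of_nonneg_left (neg_abs_le (d j)) ht
            nlinarith
          simp only [hsg]
          by_cases hp : 0 < xs j
          · rw [if_pos hp]
            rw [abs_of_pos hp] at hb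
            rw [abs_of_pos hp, abs_of_pos (by linarith : (0:ℝ) < xs j + t * d j)]
            ring
          · have hneg : xs j < 0 := lt_of_le_of_ne (not_lt.1 hp) hj
            rw [if_neg hp]
            rw [abs_of_neg hneg] at hb
            rw [abs_of_neg hneg, abs_of_neg (by linarith : xs j + t * d j < 0)]
            ring
      have h1 := htanψ (|xs j|) (|xs j + t * d j|) (abs_nonneg _) (abs_nonneg _)
      rw [habs] at h1
      have he : Dψ |xs j| * ((|xs j| + t * (if xs j = 0 then |d j| else sg j * d j)) - |xs j|)
          = t * (Dψ |xs j| * (if xs j = 0 then |d j| else sg j * d j)) := by ring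
      rw [he] at h1
      rw [habs]
      linarith [h1]
    calc (∑ j, ψ |xs j + t * d j|)
        ≤ ∑ j, (ψ |xs j| + t * (Dψ |xs j| * (if xs j = 0 then |d j| else sg j * d j))) :=
          Finset.sum_le_sum fun j _ => key j
      _ = (∑ j, ψ |xs j|) + t * h d := by
          rw [Finset.sum_add_distrib, ← Finset.mul_sum, hh]
  -- local minimality, eventually form
  have hminev : ∀ᶠ x in 𝓝 xs,
      x ∈ {x : Fin n → ℝ | ∑ i, φ ((b i - ∑ j, a i j * x j) ^ 2) ≤ σ} →
        (∑ i, ψ |xs i|) ≤ ∑ i, ψ |x i| := eventually_nhdsWithin_iff.mp hmin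
  have htend : ∀ d : Fin n → ℝ, Tendsto (fun t : ℝ => xs + t • d) (𝓝[>] 0) (𝓝 xs) := by
    intro d
    have hc : Continuous fun t : ℝ => xs + t • d :=
      continuous_const.add (continuous_id.smul continuous_const)
    have h0 := hc.tendsto 0
    simp only [zero_smul, add_zero] at h0
    exact h0.mono_left nhdsWithin_le_nhds
  have hcommon : ∀ d : Fin n → ℝ, ∀ᶠ t in 𝓝[>] (0:ℝ),
      0 < t ∧ (∀ j, xs j ≠ 0 → t * |d j| < |xs j|) ∧
        ((∑ i, φ ((b i - ∑ j, a i j * (xs j + t * d j)) ^ 2)) ≤ σ →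
          (∑ i, ψ |xs i|) ≤ ∑ i, ψ |xs i + t * d i|) := by
    intro d
    have e1 : ∀ᶠ t in 𝓝[>] (0:ℝ), 0 < t := self_mem_nhdsWithin
    have e2 : ∀ᶠ t in 𝓝[>] (0:ℝ), ∀ j, xs j ≠ 0 → t * |d j| < |xs j| := by
      rw [eventually_all]
      intro j
      by_cases hj : xs j = 0
      · filter_upwards with t hc
        exact absurd hj hc
      · have htt : Tendsto (fun t : ℝ => t * |d j|) (𝓝[>] (0:ℝ)) (𝓝 (0 * |d j|)) :=
          ((continuous_mul_right _).tendsto 0).mono_left nhdsWithin_le_nhds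
        rw [zero_mul] at htt
        filter_upwards [htt.eventually_lt_const (abs_pos.2 hj)] with t hc _
        exact hc
    have e3 : ∀ᶠ t in 𝓝[>] (0:ℝ),
        ((∑ i, φ ((b i - ∑ j, a i j * (xs j + t * d j)) ^ 2)) ≤ σ →
          (∑ i, ψ |xs i|) ≤ ∑ i, ψ |xs i + t * d i|) := by
      filter_upwards [(htend d).eventually hminev] with t hmint hcon
      have hx : (xs + t • d) ∈ {x : Fin n → ℝ | ∑ i, φ ((b i - ∑ j, a i j * x j) ^ 2) ≤ σ} := by
        simpa only [Set.mem_setOf_eq, Pi.add_apply, Pi.smul_apply, smul_eq_mul] using hcon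
      simpa only [Pi.add_apply, Pi.smul_apply, smul_eq_mul] using hmint hx
    filter_upwards [e1, e2, e3] with t h1 h2 h3
    exact ⟨h1, h2, h3⟩
  -- activity of the constraint
  have hactive : (∑ i, φ (r i ^ 2)) = σ := by
    rcases eq_or_lt_of_le hfeasr with hact | hact
    · exact hact
    exfalso
    set d : Fin n → ℝ := fun l => if l = j₀ then -(sg j₀) else 0 with hd
    have hq : Tendsto (fun t : ℝ => -(2 * t * (∑ j, v j * d j))
        + t ^ 2 * ∑ i, Dφ (r i ^ 2) * (∑ j, a i j * d j) ^ 2) (𝓝[>] (0:ℝ)) (𝓝 0) := by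
      have hc : Continuous fun t : ℝ => -(2 * t * (∑ j, v j * d j))
          + t ^ 2 * ∑ i, Dφ (r i ^ 2) * (∑ j, a i j * d j) ^ 2 :=
        (((continuous_const.mul continuous_id).mul continuous_const).neg.add
          ((continuous_pow 2).mul continuous_const))
      have h0 : Tendsto (fun t : ℝ => -(2 * t * (∑ j, v j * d j))
          + t ^ 2 * ∑ i, Dφ (r i ^ 2) * (∑ j, a i j * d j) ^ 2) (𝓝 (0:ℝ))
          (𝓝 (-(2 * (0:ℝ) * (∑ j, v j * d j))
            + (0:ℝ) ^ 2 * ∑ i, Dφ (r i ^ 2) * (∑ j, a i j * d j) ^ 2)) := hc.tendsto 0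
      rw [show -(2 * (0:ℝ) * (∑ j, v j * d j))
          + (0:ℝ) ^ 2 * ∑ i, Dφ (r i ^ 2) * (∑ j, a i j * d j) ^ 2 = 0 by norm_num] at h0
      exact h0.mono_left nhdsWithin_le_nhds
    have hev := hq.eventually_lt_const (by linarith : (0:ℝ) < σ - ∑ i, φ (r i ^ 2))
    obtain ⟨t, ⟨ht0, hsmall, hmint⟩, hslack⟩ := ((hcommon d).and hev).exists
    have hfx : (∑ i, φ ((b i - ∑ j, a i j * (xs j + t * d j)) ^ 2)) ≤ σ := by
      have h1 := hcb d t ht0.le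
      nlinarith [h1, hslack]
    have hlow := hmint hfx
    have hup := hfb d t ht0.le hsmall
    have hhd : h d = -(Dψ |xs j₀|) := by
      rw [hh]
      simp only []
      have h1 : (∑ l, Dψ |xs l| * (if xs l = 0 then |d l| else sg l * d l))
          = Dψ |xs j₀| * (if xs j₀ = 0 then |d j₀| else sg j₀ * d j₀) :=
        Finset.sum_eq_single_of_mem j₀ (Finset.mem_univ j₀)
          (fun l _ hl => by simp [hd, if_neg hl])
      rw [h1, if_neg hj₀]
      simp only [hd, if_pos rfl]
      rcases hsg1 j₀ with e | e <;> rw [e] <;> ring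
    rw [hhd] at hup
    nlinarith [hDψ j₀, hlow, hup, ht0, mul_pos ht0 (hDψ j₀)]
  -- v ≠ 0 via MFCQ
  have hvne : v ≠ 0 := by
    have h1 : (∑ i, φ ((b i - ∑ j, a i j * xs j) ^ 2)) = σ := by
      simpa only [hr] using hactive
    have h2 := hmfcq h1
    have hveq : (fun j => ∑ i, Dφ ((b i - ∑ j', a i j' * xs j') ^ 2)
        * (b i - ∑ j', a i j' * xs j') * a i j) = v := by
      simp only [hv, hr]
    intro hc
    exact h2 (hveq.trans hc)
  have hvv : 0 < ∑ j, v j ^ 2 := by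
    rcases Function.ne_iff.1 hvne with ⟨jv, hjv⟩
    refine Finset.sum_pos' (fun j _ => sq_nonneg _) ⟨jv, Finset.mem_univ jv, ?_⟩
    have : v jv ≠ 0 := hjv
    exact lt_of_le_of_ne (sq_nonneg _) (Ne.symm (pow_ne_zero 2 this))
  -- key variational inequality, strict version
  have hkey1 : ∀ d : Fin n → ℝ, 0 < (∑ j, v j * d j) → 0 ≤ h d := by
    intro d hvd
    have hq : Tendsto (fun t : ℝ => t * ∑ i, Dφ (r i ^ 2) * (∑ j, a i j * d j) ^ 2)
        (𝓝[>] (0:ℝ)) (𝓝 (0 * ∑ i, Dφ (r i ^ 2) * (∑ j, a i j * d j) ^ 2)) :=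
      ((continuous_mul_right _).tendsto 0).mono_left nhdsWithin_le_nhds
    rw [zero_mul] at hq
    obtain ⟨t, ⟨ht0, hsmall, hmint⟩, hK⟩ := ((hcommon d).and (hq.eventually_lt_const hvd)).exists
    have hfx : (∑ i, φ ((b i - ∑ j, a i j * (xs j + t * d j)) ^ 2)) ≤ σ := by
      have h1 := hcb d t ht0.le
      nlinarith [h1, mul_lt_mul_of_pos_left hK ht0, mul_pos ht0 hvd, hactive]
    have hlow := hmint hfx
    have hup := hfb d t ht0.le hsmall
    nlinarith [hlow, hup, ht0]
  -- key variational inequality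
  have hkey : ∀ d : Fin n → ℝ, 0 ≤ (∑ j, v j * d j) → 0 ≤ h d := by
    intro d hvd
    rcases lt_or_eq_of_le hvd with hlt | heq
    · exact hkey1 d hlt
    · have hsub : ∀ ε : ℝ, 0 < ε → 0 ≤ h d + ε * h v := by
        intro ε hε
        have h1 : 0 < ∑ j, v j * (d j + ε * v j) := by
          have e : (∑ j, v j * (d j + ε * v j)) = (∑ j, v j * d j) + ε * ∑ j, v j ^ 2 := by
            rw [Finset.mul_sum, ← Finset.sum_add_distrib]
            apply Finset.sum_congr rfl
            intro j _; ring
          rw [e, ← heq]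
          have := mul_pos hε hvv
          linarith
        have h2 := hkey1 (fun j => d j + ε * v j) h1
        have h3 : h (fun j => d j + ε * v j) ≤ h d + ε * h v := by
          rw [hh]
          simp only []
          rw [Finset.mul_sum, ← Finset.sum_add_distrib]
          apply Finset.sum_le_sum
          intro j _
          by_cases hj : xs j = 0
          · simp only [if_pos hj]
            have habs : |d j + ε * v j| ≤ |d j| + ε * |v j| := by
              calc |d j + ε * v j| ≤ |d j| + |ε * v j| := abs_add_le _ _
                _ = |d j| + ε * |v j| := by rw [abs_mul, abs_of_pos hε]
            nlinarith [mul_le_mul_of_nonneg_left habs (hDψ j).le]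
          · simp only [if_neg hj]
            exact le_of_eq (by ring)
        linarith
      by_contra hneg
      push_neg at hneg
      rcases le_or_gt (h v) 0 with hv0 | hv0
      · have := hsub 1 one_pos; linarith
      · have hpos : 0 < -(h d) / (2 * h v) := div_pos (by linarith) (by linarith)
        have h4 := hsub _ hpos
        have he : h d + -(h d) / (2 * h v) * h v = h d / 2 := by
          field_simp
          ring
        rw [he] at h4
        linarith
  -- single and pair test vectors
  have mainS : ∀ (F : Fin n → ℝ → ℝ), (∀ l, F l 0 = 0) → ∀ (j : Fin n) (α : ℝ),
      (∑ l, F l (if l = j then α else 0)) = F j α := by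
    intro F hF j α
    have h1 : (∑ l, F l (if l = j then α else 0)) = F j (if j = j then α else 0) :=
      Finset.sum_eq_single_of_mem j (Finset.mem_univ j) (fun l _ hl => by
        show F l (if l = j then α else 0) = 0
        rw [if_neg hl, hF])
    rw [h1, if_pos rfl]
  have mainP : ∀ (F : Fin n → ℝ → ℝ), (∀ l, F l 0 = 0) → ∀ (j k : Fin n), j ≠ k →
      ∀ (α β : ℝ), (∑ l, F l (if l = j then α else if l = k then β else 0)) = F j α + F k β := by
    intro F hF j k hjk α β
    have e := Finset.sum_subset (Finset.subset_univ ({j, k} : Finset (Fin n)))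
      (f := fun l => F l (if l = j then α else if l = k then β else 0))
      (fun l _ hl => by
        show F l (if l = j then α else if l = k then β else 0) = 0
        simp only [Finset.mem_insert, Finset.mem_singleton, not_or] at hl
        rw [if_neg hl.1, if_neg hl.2, hF])
    rw [← e, Finset.sum_pair hjk]
    simp [Ne.symm hjk]
  have hSv : ∀ (j : Fin n) (α : ℝ), (∑ l, v l * (if l = j then α else 0)) = v j * α :=
    fun j α => mainS (fun l x => v l * x) (fun l => mul_zero _) j α
  have hSh : ∀ (j : Fin n) (α : ℝ),
      h (fun l => if l = j then α else 0) = Dψ |xs j| * (if xs j = 0 then |α| else sg j * α) := by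
    intro j α
    rw [hh]
    exact mainS (fun l x => Dψ |xs l| * (if xs l = 0 then |x| else sg l * x))
      (fun l => by by_cases hl : xs l = 0 <;> simp [hl]) j α
  have hPv : ∀ (j k : Fin n), j ≠ k → ∀ (α β : ℝ),
      (∑ l, v l * (if l = j then α else if l = k then β else 0)) = v j * α + v k * β :=
    fun j k hjk α β => mainP (fun l x => v l * x) (fun l => mul_zero _) j k hjk α β
  have hPh : ∀ (j k : Fin n), j ≠ k → ∀ (α β : ℝ),
      h (fun l => if l = j then α else if l = k then β else 0)
        = Dψ |xs j| * (if xs j = 0 then |α| else sg j * α)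
          + Dψ |xs k| * (if xs k = 0 then |β| else sg k * β) := by
    intro j k hjk α β
    rw [hh]
    exact mainP (fun l x => Dψ |xs l| * (if xs l = 0 then |x| else sg l * x))
      (fun l => by by_cases hl : xs l = 0 <;> simp [hl]) j k hjk α β
  -- nonzero components of v on the support
  have hvj : ∀ j, xs j ≠ 0 → v j ≠ 0 := by
    intro j hj hv0
    have h1 := hkey (fun l => if l = j then (1:ℝ) else 0) (by
      rw [hSv j 1, hv0]
      norm_num)
    have h2 := hkey (fun l => if l = j then (-1:ℝ) else 0) (by
      rw [hSv j (-1), hv0]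
      norm_num)
    rw [hSh j 1, if_neg hj] at h1
    rw [hSh j (-1), if_neg hj] at h2
    rcases hsg1 j with e | e <;> rw [e] at h1 h2 <;> nlinarith [hDψ j]
  have hvj₀ := hvj j₀ hj₀
  -- the multiplier
  obtain ⟨lam, hlamdef⟩ : ∃ l : ℝ, l = Dψ |xs j₀| * sg j₀ / (2 * v j₀) := ⟨_, rfl⟩
  have hsv : 0 ≤ Dψ |xs j₀| * (sg j₀ * v j₀) := by
    have h1 := hkey (fun l => if l = j₀ then v j₀ else 0) (by
      rw [hSv j₀ (v j₀)]
      exact mul_self_nonneg _)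
    rw [hSh j₀ (v j₀), if_neg hj₀] at h1
    exact h1
  have hlam0 : 0 ≤ lam := by
    rw [hlamdef]
    have he : Dψ |xs j₀| * sg j₀ / (2 * v j₀) = (Dψ |xs j₀| * (sg j₀ * v j₀)) / (2 * v j₀ ^ 2) := by
      field_simp
    rw [he]
    exact div_nonneg hsv (by positivity)
  have hmain₀ : 2 * lam * v j₀ = Dψ |xs j₀| * sg j₀ := by
    rw [hlamdef]
    field_simp
  have hmain : ∀ j, xs j ≠ 0 → 2 * lam * v j = Dψ |xs j| * sg j := by
    intro j hj
    by_cases hjj : j = j₀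
    · subst hjj
      exact hmain₀
    · have hp1 := hkey (fun l => if l = j then v j₀ else if l = j₀ then -(v j) else 0) (by
        rw [hPv j j₀ hjj]
        exact le_of_eq (by ring))
      have hp2 := hkey (fun l => if l = j then -(v j₀) else if l = j₀ then v j else 0) (by
        rw [hPv j j₀ hjj]
        exact le_of_eq (by ring))
      rw [hPh j j₀ hjj, if_neg hj, if_neg hj₀] at hp1 hp2
      rw [show Dψ |xs j₀| * (sg j₀ * -(v j)) = -(Dψ |xs j₀| * (sg j₀ * v j)) by ring] at hp1
      rw [show Dψ |xs j| * (sg j * -(v j₀)) = -(Dψ |xs j| * (sg j * v j₀)) by ring] at hp2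
      have heq : Dψ |xs j| * (sg j * v j₀) = Dψ |xs j₀| * (sg j₀ * v j) :=
        le_antisymm (by linarith) (by linarith)
      apply mul_right_cancel₀ hvj₀
      calc 2 * lam * v j * v j₀ = (2 * lam * v j₀) * v j := by ring
        _ = (Dψ |xs j₀| * sg j₀) * v j := by rw [hmain₀]
        _ = Dψ |xs j| * sg j * v j₀ := by linear_combination -heq
  -- bound on zero components
  have hzero : ∀ j, xs j = 0 → |2 * lam * v j| ≤ Dψ 0 := by
    intro j hj
    have hjj : j ≠ j₀ := fun e => hj₀ (e ▸ hj)
    have hb1 := hkey (fun l => if l = j then (1:ℝ) else if l = j₀ then -(v j / v j₀) else 0) (by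
      rw [hPv j j₀ hjj]
      have he : v j * 1 + v j₀ * -(v j / v j₀) = 0 := by
        field_simp [hvj₀]
        try ring
      exact le_of_eq he.symm)
    have hb2 := hkey (fun l => if l = j then (-1:ℝ) else if l = j₀ then v j / v j₀ else 0) (by
      rw [hPv j j₀ hjj]
      have he : v j * (-1) + v j₀ * (v j / v j₀) = 0 := by
        field_simp [hvj₀]
        try ring
      exact le_of_eq he.symm)
    rw [hPh j j₀ hjj, if_pos hj, if_neg hj₀] at hb1
    rw [hPh j j₀ hjj, if_pos hj, if_neg hj₀] at hb2
    simp only [hj, abs_zero, abs_one, abs_neg] at hb1 hb2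
    have hm := hmain j₀ hj₀
    have hx : Dψ |xs j₀| * (sg j₀ * (v j / v j₀)) = 2 * lam * v j := by
      have e : (2 * lam * v j₀) * (v j / v j₀) = 2 * lam * v j := by
        field_simp [hvj₀]
        try ring
      rw [hm] at e
      linear_combination e
    rw [abs_le]
    constructor <;> linarith [hb1, hb2, hx]
  -- the subgradient
  obtain ⟨g, hg⟩ : ∃ g : Fin n → ℝ, g = fun j => 2 * lam * v j / Dψ |xs j| := ⟨_, rfl⟩
  have hgs : ∀ j, xs j ≠ 0 → g j = sg j := by
    intro j hj
    rw [hg]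
    show 2 * lam * v j / Dψ |xs j| = sg j
    rw [hmain j hj]
    field_simp [(hDψ j).ne']
  have hgb : ∀ j, |g j| ≤ 1 := by
    intro j
    by_cases hj : xs j = 0
    · rw [hg]
      show abs (2 * lam * v j / Dψ |xs j|) ≤ 1
      rw [abs_div, abs_of_pos (hDψ j), div_le_one (hDψ j)]
      calc |2 * lam * v j| ≤ Dψ 0 := hzero j hj
        _ = Dψ |xs j| := by rw [hj, abs_zero]
    · rw [hgs j hj]
      rcases hsg1 j with e | e <;> rw [e] <;> norm_num
  have hgx : ∀ j, g j * xs j = |xs j| := by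
    intro j
    by_cases hj : xs j = 0
    · rw [hj, abs_zero, mul_zero]
    · rw [hgs j hj, hsgabs j hj]
  -- assemble
  refine ⟨lam, hlam0, ?_, g, ?_, ?_⟩
  · have he : (∑ i, φ ((b i - ∑ j, a i j * xs j) ^ 2)) = σ := by
      simpa only [hr] using hactive
    rw [he]
    ring
  · intro y
    have hterm : ∀ i : Fin n, |xs i| + g i * (y i - xs i) ≤ |y i| := by
      intro i
      have h1 : g i * y i ≤ |y i| := by
        calc g i * y i ≤ |g i * y i| := le_abs_self _
          _ = |g i| * |y i| := abs_mul _ _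
          _ ≤ 1 * |y i| := mul_le_mul_of_nonneg_right (hgb i) (abs_nonneg _)
          _ = |y i| := one_mul _
      have h2 := hgx i
      nlinarith [h1, h2]
    calc (∑ i, |xs i|) + ∑ i, g i * (y i - xs i)
        = ∑ i, (|xs i| + g i * (y i - xs i)) := (Finset.sum_add_distrib).symm
      _ ≤ ∑ i, |y i| := Finset.sum_le_sum fun i _ => hterm i
  · intro j
    have hvg : (∑ i, Dφ ((b i - ∑ j', a i j' * xs j') ^ 2)
        * (b i - ∑ j', a i j' * xs j') * a i j) = v j := by
      simp only [hv, hr]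
    rw [hvg, hg]
    show Dψ |xs j| * (2 * lam * v j / Dψ |xs j|) - 2 * lam * v j = 0
    field_simp [(hDψ j).ne']
    ring
end

section
/- Suppose x^k is feasible, i.e., ∑_{i=1}^m φ((b_i - a_iᵀx^k)²) ≤ σ, where φ is concave with φ(0)=0 and nonnegative right derivative, σ ∈ (0, ∑φ(b_i²)) is not an integer multiple of sup φ, and A has full row rank. Define σ_k := σ + ∑_{i=1}^m φ'₊((b_i-a_iᵀx^k)²)(b_i-a_iᵀx^k)² - ∑_{i=1}^m φ((b_i-a_iᵀx^k)²). Then 0 < σ_k ≤ σ. -/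
open Set Filter

/-- Tangent line of a concave function (with right derivatives) lies above the graph. -/
lemma tangent_above (φ D : ℝ → ℝ)
    (hconc : ConcaveOn ℝ (Set.Ici 0) φ)
    (hderiv : ∀ t ∈ Set.Ici (0:ℝ), HasDerivWithinAt φ (D t) (Set.Ici t) t)
    {t s : ℝ} (ht : 0 ≤ t) (hs : 0 ≤ s) :
    φ s ≤ φ t + D t * (s - t) := by
  have hd : HasDerivWithinAt φ (D t) (Set.Ioi t) t :=
    (hderiv t ht).mono Ioi_subset_Ici_self
  rcases lt_trichotomy s t with hst | hst | hst
  · -- s < t : show D t ≤ slope φ s t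
    have hkey : ∀ u ∈ Set.Ioi t, slope φ t u ≤ (φ t - φ s) / (t - s) := by
      intro u hu
      rw [slope_def_field]
      exact hconc.slope_anti_adjacent hs (le_trans ht (le_of_lt hu)) hst hu
    have htend := (hasDerivWithinAt_iff_tendsto_slope' notMem_Ioi_self).mp hd
    have hle : D t ≤ (φ t - φ s) / (t - s) := by
      refine le_of_tendsto htend ?_
      filter_upwards [self_mem_nhdsWithin] with u hu using hkey u hu
    have hpos : (0:ℝ) < t - s := by linarith
    nlinarith [(le_div_iff₀ hpos).mp hle]
  · simp [hst]
  · -- t < s : slope φ t s ≤ D t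
    have hle : slope φ t s ≤ D t :=
      hconc.slope_le_of_hasDerivWithinAt_Ioi ht (le_trans ht hst.le) hst hd
    rw [slope_def_field] at hle
    have hpos : (0:ℝ) < s - t := by linarith
    nlinarith [(div_le_iff₀ hpos).mp hle]

/-- Lemma 3.1(i): if `xk` is feasible, then
`σk := σ + ∑ D((bᵢ-aᵢᵀxk)²)(bᵢ-aᵢᵀxk)² - ∑ φ((bᵢ-aᵢᵀxk)²)` satisfies `0 < σk ≤ σ`.
`D` is the right derivative of `φ` on `[0,∞)`. -/
theorem sigma_k_bounds
    (m n : ℕ) (φ D : ℝ → ℝ)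
    (a : Fin m → Fin n → ℝ) (b : Fin m → ℝ) (σ : ℝ) (xk : Fin n → ℝ)
    (hcont : ContinuousOn φ (Set.Ici 0))
    (hconc : ConcaveOn ℝ (Set.Ici 0) φ)
    (h0 : φ 0 = 0)
    (hnonneg : ∀ t ∈ Set.Ici (0:ℝ), 0 ≤ φ t)
    (hderiv : ∀ t ∈ Set.Ici (0:ℝ), HasDerivWithinAt φ (D t) (Set.Ici t) t)
    (hDnonneg : ∀ t ∈ Set.Ici (0:ℝ), 0 ≤ D t)
    (hD0 : 0 < D 0)
    (hrank : LinearIndependent ℝ a)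
    (hσpos : 0 < σ) (hσlt : σ < ∑ i, φ (b i ^ 2))
    (hnotmul : ∀ k : ℕ, 1 ≤ k → k ≤ m →
      (σ : EReal) ≠ ((k : ℝ) : EReal) * (⨆ t : Set.Ici (0:ℝ), ((φ t : ℝ) : EReal)))
    (hfeas : ∑ i, φ ((b i - ∑ j, a i j * xk j) ^ 2) ≤ σ) :
    0 < σ + (∑ i, D ((b i - ∑ j, a i j * xk j) ^ 2) * (b i - ∑ j, a i j * xk j) ^ 2)
        - ∑ i, φ ((b i - ∑ j, a i j * xk j) ^ 2) ∧
    σ + (∑ i, D ((b i - ∑ j, a i j * xk j) ^ 2) * (b i - ∑ j, a i j * xk j) ^ 2)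
        - ∑ i, φ ((b i - ∑ j, a i j * xk j) ^ 2) ≤ σ := by
  set t : Fin m → ℝ := fun i => (b i - ∑ j, a i j * xk j) ^ 2 with ht
  have htnn : ∀ i, (0:ℝ) ≤ t i := fun i => sq_nonneg _
  -- D(t)·t ≤ φ(t)
  have key1 : ∀ i, D (t i) * t i ≤ φ (t i) := by
    intro i
    have := tangent_above φ D hconc hderiv (htnn i) (le_refl (0:ℝ))
    rw [h0] at this; nlinarith
  have hsum1 : (∑ i, D (t i) * t i) ≤ ∑ i, φ (t i) :=
    Finset.sum_le_sum fun i _ => key1 i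
  refine ⟨?_, by linarith⟩
  by_contra h
  push_neg at h
  have hS0 : ∀ i, (0:ℝ) ≤ D (t i) * t i :=
    fun i => mul_nonneg (hDnonneg _ (htnn i)) (htnn i)
  have hSnn : (0:ℝ) ≤ ∑ i, D (t i) * t i := Finset.sum_nonneg fun i _ => hS0 i
  have hSzero : (∑ i, D (t i) * t i) = 0 := le_antisymm (by linarith) hSnn
  have hFσ : (∑ i, φ (t i)) = σ := by linarith
  have hterm : ∀ i ∈ Finset.univ, D (t i) * t i = 0 :=
    (Finset.sum_eq_zero_iff_of_nonneg fun i _ => hS0 i).mp hSzero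
  set P : Finset (Fin m) := Finset.univ.filter (fun i => t i ≠ 0) with hP
  -- each i ∈ P has D (t i) = 0
  have hDz : ∀ i ∈ P, D (t i) = 0 := by
    intro i hi
    have hti : t i ≠ 0 := (Finset.mem_filter.mp hi).2
    rcases mul_eq_zero.mp (hterm i (Finset.mem_univ i)) with h' | h'
    · exact h'
    · exact absurd h' hti
  -- φ vanishes off P, so σ = ∑_{i∈P} φ(t i)
  have hσP : σ = ∑ i ∈ P, φ (t i) := by
    rw [← hFσ, ← Finset.sum_filter_add_sum_filter_not Finset.univ (fun i => t i ≠ 0) (fun i => φ (t i))]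
    have : ∑ i ∈ Finset.univ.filter (fun i => ¬ t i ≠ 0), φ (t i) = 0 := by
      apply Finset.sum_eq_zero
      intro i hi
      have : t i = 0 := not_not.mp (Finset.mem_filter.mp hi).2
      rw [this, h0]
    rw [this, add_zero]
  have hPne : P.Nonempty := by
    rcases P.eq_empty_or_nonempty with he | hne
    · exfalso; rw [he, Finset.sum_empty] at hσP; linarith
    · exact hne
  obtain ⟨i0, hi0⟩ := hPne
  -- φ (t i0) is the supremum
  have htop : ∀ i ∈ P, ∀ s ∈ Set.Ici (0:ℝ), φ s ≤ φ (t i) := by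
    intro i hi s hs
    have := tangent_above φ D hconc hderiv (htnn i) hs
    rw [hDz i hi] at this; linarith
  have hall : ∀ i ∈ P, φ (t i) = φ (t i0) :=
    fun i hi => le_antisymm (htop i0 hi0 _ (htnn i)) (htop i hi _ (htnn i0))
  have hsup : (⨆ u : Set.Ici (0:ℝ), ((φ u : ℝ) : EReal)) = ((φ (t i0) : ℝ) : EReal) := by
    apply le_antisymm
    · exact iSup_le fun u => EReal.coe_le_coe_iff.mpr (htop i0 hi0 u u.2)
    · exact le_iSup (fun u : Set.Ici (0:ℝ) => ((φ u : ℝ) : EReal)) ⟨t i0, htnn i0⟩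
  have hσk : σ = (P.card : ℝ) * φ (t i0) := by
    rw [hσP, Finset.sum_congr rfl hall, Finset.sum_const, nsmul_eq_mul]
  have hk1 : 1 ≤ P.card := Finset.card_pos.mpr ⟨i0, hi0⟩
  have hkm : P.card ≤ m := le_trans (Finset.card_le_univ P) (by simp)
  apply hnotmul P.card hk1 hkm
  rw [hsup, ← EReal.coe_mul, hσk]
end

section
/- Let x^k be feasible for the constraint ∑φ((b_i-a_iᵀx)²) ≤ σ, and define A_k = Diag(v^k)A, b^k = v^k ∘ b with v^k_i = √(φ'₊((b_i-a_iᵀx^k)²)), and σ_k = σ + ‖b^k - A_k x^k‖² - ∑φ((b_i-a_iᵀx^k)²). For any x ∈ ℝ^n define P_k(x) = x if ‖A_kx - b^k‖² ≤ σ_k, and P_k(x) = (1 - √σ_k/‖A_kx - b^k‖) A†b + (√σ_k/‖A_kx - b^k‖) x otherwise. Then for every x ∈ ℝ^n, P_k(x) is feasible: ∑_{i=1}^m φ((b_i - a_iᵀP_k(x))²) ≤ σ. -/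
/-- Tangent-line inequality for a concave function on `Ici 0` with right derivative `D`. -/
lemma concave_tangent_le {φ D : ℝ → ℝ}
    (hconc : ConcaveOn ℝ (Set.Ici 0) φ)
    (hderiv : ∀ t ∈ Set.Ici (0:ℝ), HasDerivWithinAt φ (D t) (Set.Ici t) t)
    {s t : ℝ} (hs : 0 ≤ s) (ht : 0 ≤ t) :
    φ s ≤ φ t + D t * (s - t) := by
  rcases lt_trichotomy s t with hlt | rfl | hlt
  · -- s < t : show D t ≤ slope φ s t via limit of right slopes
    have hDle : D t ≤ slope φ s t := by
      have hIoi : HasDerivWithinAt φ (D t) (Set.Ioi t) t :=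
        (hderiv t ht).mono Set.Ioi_subset_Ici_self
      have htend : Filter.Tendsto (slope φ t) (nhdsWithin t (Set.Ioi t \ {t})) (nhds (D t)) :=
        (hasDerivWithinAt_iff_tendsto_slope).mp hIoi
      rw [Set.diff_singleton_eq_self (by simp)] at htend
      have : ∀ u ∈ Set.Ioi t, slope φ t u ≤ slope φ s t := by
        intro u hu
        have h1 := hconc.slope_anti_adjacent hs (le_trans ht (le_of_lt hu))
          hlt (Set.mem_Ioi.mp hu)
        simpa [slope_def_field] using h1
      refine le_of_tendsto htend ?_
      filter_upwards [self_mem_nhdsWithin] with u hu using this u hu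
    have hst : 0 < t - s := by linarith
    rw [slope_def_field, le_div_iff₀ hst] at hDle
    nlinarith
  · simp
  · -- t < s : slope φ t s ≤ D t
    have h := hconc.slope_le_of_hasDerivWithinAt_Ioi ht (le_trans ht (le_of_lt hlt)) hlt
      ((hderiv t ht).mono Set.Ioi_subset_Ici_self)
    rw [slope_def_field, div_le_iff₀ (by linarith : (0:ℝ) < s - t)] at h
    linarith

/-- Lemma 3.1(ii): with `v i = √(φ'₊((bᵢ-aᵢᵀxk)²))`, scaled data
`Ak = Diag(v)A`, `bk = v ∘ b`, and `σk = σ + ‖bk - Ak xk‖² - ∑ φ((bᵢ-aᵢᵀxk)²) > 0`,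
the retraction `P` maps every point into the feasible set of the original constraint.
`D` is the right derivative of `φ` and `xdag = A†b` satisfies `A xdag = b`. -/
theorem retraction_feasible
    (m n : ℕ) (φ D : ℝ → ℝ)
    (a : Fin m → Fin n → ℝ) (b : Fin m → ℝ) (σ : ℝ)
    (xk xdag : Fin n → ℝ) (v : Fin m → ℝ) (σk : ℝ)
    (P : (Fin n → ℝ) → (Fin n → ℝ))
    (hcont : ContinuousOn φ (Set.Ici 0))
    (hconc : ConcaveOn ℝ (Set.Ici 0) φ)
    (h0 : φ 0 = 0)
    (hnonneg : ∀ t ∈ Set.Ici (0:ℝ), 0 ≤ φ t)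
    (hderiv : ∀ t ∈ Set.Ici (0:ℝ), HasDerivWithinAt φ (D t) (Set.Ici t) t)
    (hDnonneg : ∀ t ∈ Set.Ici (0:ℝ), 0 ≤ D t)
    (hxdag : ∀ i, ∑ j, a i j * xdag j = b i)
    (hfeas : ∑ i, φ ((b i - ∑ j, a i j * xk j) ^ 2) ≤ σ)
    (hv : ∀ i, v i = Real.sqrt (D ((b i - ∑ j, a i j * xk j) ^ 2)))
    (hσk : σk = σ + (∑ i, (v i * b i - v i * ∑ j, a i j * xk j) ^ 2)
        - ∑ i, φ ((b i - ∑ j, a i j * xk j) ^ 2))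
    (hσkpos : 0 < σk)
    (hP : ∀ x : Fin n → ℝ, P x =
      if (∑ i, (v i * (∑ j, a i j * x j) - v i * b i) ^ 2) ≤ σk then x
      else fun j =>
        (1 - Real.sqrt σk /
            Real.sqrt (∑ i, (v i * (∑ j', a i j' * x j') - v i * b i) ^ 2)) * xdag j +
        (Real.sqrt σk /
            Real.sqrt (∑ i, (v i * (∑ j', a i j' * x j') - v i * b i) ^ 2)) * x j) :
    ∀ x : Fin n → ℝ, ∑ i, φ ((b i - ∑ j, a i j * (P x) j) ^ 2) ≤ σ := by
  intro x
  -- v i ^ 2 = D of old residual squared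
  have hv2 : ∀ i, v i ^ 2 = D ((b i - ∑ j, a i j * xk j) ^ 2) := by
    intro i
    rw [hv i, Real.sq_sqrt (hDnonneg _ (Set.mem_Ici.mpr (by positivity)))]
  -- Key: the scaled residual of P x is at most σk
  have key : ∑ i, (v i * (∑ j, a i j * (P x) j) - v i * b i) ^ 2 ≤ σk := by
    by_cases h : (∑ i, (v i * (∑ j, a i j * x j) - v i * b i) ^ 2) ≤ σk
    · rw [hP x, if_pos h]
      exact h
    · rw [hP x, if_neg h]
      set r : ℝ := ∑ i, (v i * (∑ j', a i j' * x j') - v i * b i) ^ 2 with hr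
      have hrpos : 0 < r := lt_trans hσkpos (lt_of_not_ge h)
      set α : ℝ := Real.sqrt σk / Real.sqrt r with hα
      have hα2 : α ^ 2 = σk / r := by
        rw [hα, div_pow, Real.sq_sqrt hσkpos.le, Real.sq_sqrt hrpos.le]
      have hsum : ∀ i, (∑ j, a i j * ((1 - α) * xdag j + α * x j))
          = (1 - α) * b i + α * ∑ j, a i j * x j := by
        intro i
        rw [← hxdag i, Finset.mul_sum, Finset.mul_sum, ← Finset.sum_add_distrib]
        exact Finset.sum_congr rfl fun j _ => by ring
      calc ∑ i, (v i * (∑ j, a i j * ((1 - α) * xdag j + α * x j)) - v i * b i) ^ 2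
          = ∑ i, α ^ 2 * (v i * (∑ j', a i j' * x j') - v i * b i) ^ 2 := by
            refine Finset.sum_congr rfl fun i _ => ?_
            rw [hsum i]; ring
        _ = α ^ 2 * r := by rw [← Finset.mul_sum]
        _ = σk := by rw [hα2, div_mul_cancel₀ _ (ne_of_gt hrpos)]
        _ ≤ σk := le_refl _
  -- tangent inequality termwise
  have hterm : ∀ i ∈ Finset.univ, φ ((b i - ∑ j, a i j * (P x) j) ^ 2)
      ≤ φ ((b i - ∑ j, a i j * xk j) ^ 2)
        + D ((b i - ∑ j, a i j * xk j) ^ 2)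
          * ((b i - ∑ j, a i j * (P x) j) ^ 2 - (b i - ∑ j, a i j * xk j) ^ 2) := by
    intro i _
    exact concave_tangent_le hconc hderiv (by positivity) (by positivity)
  have hsum := Finset.sum_le_sum hterm
  rw [Finset.sum_add_distrib] at hsum
  -- rewrite the derivative terms using v² = D
  have hDterm : ∑ i, D ((b i - ∑ j, a i j * xk j) ^ 2)
        * ((b i - ∑ j, a i j * (P x) j) ^ 2 - (b i - ∑ j, a i j * xk j) ^ 2)
      = (∑ i, (v i * (∑ j, a i j * (P x) j) - v i * b i) ^ 2)
        - ∑ i, (v i * b i - v i * ∑ j, a i j * xk j) ^ 2 := by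
    rw [← Finset.sum_sub_distrib]
    refine Finset.sum_congr rfl fun i _ => ?_
    rw [← hv2 i]; ring
  rw [hDterm] at hsum
  have := hσk
  linarith [key]
end

section
/- With notation as above (y ≠ 0, ‖v‖² ≤ σ) and assuming additionally ‖v‖ ≤ √ε·√σ for some ε ∈ (0,1], the larger root q = ((vᵀy)+√Δ)/‖y‖² satisfies q ≥ (1 − 3√ε)·√σ/‖y‖. -/
/-- with `y ≠ 0`, `‖v‖² ≤ σ` and additionally `‖v‖ ≤ √ε √σ` for some
`ε ∈ (0,1]`, the larger root `q = (⟪v,y⟫ + √Δ)/‖y‖²` satisfies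
`q ≥ (1 − 3√ε) √σ / ‖y‖`. -/
theorem larger_root_lower_bound
    (m : ℕ) (v y : EuclideanSpace ℝ (Fin m)) (σ Δ q ε : ℝ)
    (hy : y ≠ 0) (hσ : 0 < σ) (hv : ‖v‖ ^ 2 ≤ σ)
    (hεpos : 0 < ε) (hεle : ε ≤ 1)
    (hvε : ‖v‖ ≤ Real.sqrt ε * Real.sqrt σ)
    (hΔ : Δ = (inner ℝ v y : ℝ) ^ 2 - ‖y‖ ^ 2 * (‖v‖ ^ 2 - σ))
    (hq : q = ((inner ℝ v y : ℝ) + Real.sqrt Δ) / ‖y‖ ^ 2) :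
    (1 - 3 * Real.sqrt ε) * Real.sqrt σ / ‖y‖ ≤ q := by
  have hn : (0:ℝ) < ‖y‖ := norm_pos_iff.mpr hy
  set a : ℝ := (inner ℝ v y : ℝ) with ha
  set t := Real.sqrt ε with ht
  set s := Real.sqrt (1 - ε) with hs
  set rσ := Real.sqrt σ with hrσ
  have htsq : t ^ 2 = ε := Real.sq_sqrt hεpos.le
  have hssq : s ^ 2 = 1 - ε := Real.sq_sqrt (by linarith)
  have hrσsq : rσ ^ 2 = σ := Real.sq_sqrt hσ.le
  have ht0 : 0 ≤ t := Real.sqrt_nonneg _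
  have hs0 : 0 ≤ s := Real.sqrt_nonneg _
  have hrσ0 : 0 ≤ rσ := Real.sqrt_nonneg _
  -- key scalar inequality: s ≥ 1 - 2t
  have hkey : 1 - 2 * t ≤ s := by nlinarith [sq_nonneg (s - t), sq_nonneg t, sq_nonneg (1 - 2*t)]
  -- Cauchy-Schwarz
  have hCS : |a| ≤ ‖v‖ * ‖y‖ := abs_real_inner_le_norm v y
  have hCS' : -(t * rσ * ‖y‖) ≤ a := by
    have := neg_abs_le a
    nlinarith [mul_le_mul_of_nonneg_right hvε hn.le]
  -- ‖v‖² ≤ ε σ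
  have hv2 : ‖v‖ ^ 2 ≤ ε * σ := by
    nlinarith [norm_nonneg v, mul_nonneg ht0 hrσ0]
  -- lower bound on √Δ
  have hΔlb : ‖y‖ * s * rσ ≤ Real.sqrt Δ := by
    rw [show ‖y‖ * s * rσ = Real.sqrt (‖y‖^2 * (1-ε) * σ) by
      rw [show ‖y‖^2 * (1-ε) * σ = (‖y‖ * s * rσ)^2 by ring_nf; rw [hssq, hrσsq]; ring]
      exact (Real.sqrt_sq (by positivity)).symm]
    apply Real.sqrt_le_sqrt
    nlinarith [sq_nonneg a, sq_nonneg ‖y‖]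
  rw [hq, div_le_div_iff₀ hn (by positivity)]
  nlinarith [mul_le_mul_of_nonneg_left hkey (mul_nonneg hn.le hrσ0),
    mul_le_mul_of_nonneg_right hΔlb hn.le, mul_nonneg (mul_nonneg ht0 hrσ0) hn.le,
    mul_le_mul_of_nonneg_right hCS' hn.le]
end

section
/- Let x^k be feasible for ∑φ((b_i-a_iᵀx)²) ≤ σ and define A_k, b^k, σ_k as in the DIRL₁ algorithm. If x is feasible for the subproblem, i.e., ‖A_k x - b^k‖² ≤ σ_k, then x is feasible for the original constraint: ∑_{i=1}^m φ((b_i - a_iᵀx)²) ≤ σ. -/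
open Set

/-- Concave majorization: `φ s ≤ φ t + D t * (s - t)` where `D t` is the right
derivative of `φ` at `t`. -/
lemma concave_majorization (φ D : ℝ → ℝ)
    (hconc : ConcaveOn ℝ (Set.Ici 0) φ)
    (hderiv : ∀ t ∈ Set.Ici (0:ℝ), HasDerivWithinAt φ (D t) (Set.Ici t) t)
    {s t : ℝ} (hs : (0:ℝ) ≤ s) (ht : (0:ℝ) ≤ t) :
    φ s ≤ φ t + D t * (s - t) := by
  rcases lt_trichotomy s t with h | rfl | h
  · -- need : D t ≤ slope φ s t
    have hIoi : HasDerivWithinAt φ (D t) (Set.Ioi t) t :=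
      (hderiv t ht).mono Set.Ioi_subset_Ici_self
    have hlim := hasDerivWithinAt_iff_tendsto_slope.1 hIoi
    have hset : Set.Ioi t \ {t} = Set.Ioi t := by
      simp [Set.diff_singleton_eq_self]
    rw [hset] at hlim
    have hub : ∀ᶠ u in nhdsWithin t (Set.Ioi t), slope φ t u ≤ slope φ s t := by
      filter_upwards [self_mem_nhdsWithin] with u hu
      rw [slope_def_field, slope_def_field]
      exact hconc.slope_anti_adjacent hs (le_trans ht (le_of_lt hu)) h hu
    have hle : D t ≤ slope φ s t := le_of_tendsto hlim hub
    rw [slope_def_field] at hle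
    have hts : 0 < t - s := sub_pos.2 h
    have : D t * (t - s) ≤ φ t - φ s := (le_div_iff₀ hts).1 hle
    nlinarith
  · simp
  · have hle : slope φ t s ≤ D t :=
      hconc.slope_le_of_hasDerivWithinAt_Ioi ht hs h
        ((hderiv t ht).mono Set.Ioi_subset_Ici_self)
    rw [slope_def_field] at hle
    have hst : 0 < s - t := sub_pos.2 h
    have : φ s - φ t ≤ D t * (s - t) := by
      rw [div_le_iff₀ hst] at hle; linarith
    linarith

/-- if `xk` is feasible for `∑ φ((bᵢ-aᵢᵀx)²) ≤ σ` and `x` is feasible for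
the subproblem `‖Ak x - bk‖² ≤ σk` (with `Ak = Diag(v)A`, `bk = v ∘ b`,
`v i = √(φ'₊((bᵢ-aᵢᵀxk)²))` and `σk = σ + ‖bk - Ak xk‖² - ∑ φ((bᵢ-aᵢᵀxk)²)`), then `x`
is feasible for the original constraint. `D` is the right derivative of `φ`. -/
theorem subproblem_feasible_implies_feasible
    (m n : ℕ) (φ D : ℝ → ℝ)
    (a : Fin m → Fin n → ℝ) (b : Fin m → ℝ) (σ : ℝ)
    (xk : Fin n → ℝ) (v : Fin m → ℝ) (σk : ℝ)
    (hcont : ContinuousOn φ (Set.Ici 0))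
    (hconc : ConcaveOn ℝ (Set.Ici 0) φ)
    (h0 : φ 0 = 0)
    (hnonneg : ∀ t ∈ Set.Ici (0:ℝ), 0 ≤ φ t)
    (hderiv : ∀ t ∈ Set.Ici (0:ℝ), HasDerivWithinAt φ (D t) (Set.Ici t) t)
    (hDnonneg : ∀ t ∈ Set.Ici (0:ℝ), 0 ≤ D t)
    (hfeas : ∑ i, φ ((b i - ∑ j, a i j * xk j) ^ 2) ≤ σ)
    (hv : ∀ i, v i = Real.sqrt (D ((b i - ∑ j, a i j * xk j) ^ 2)))
    (hσk : σk = σ + (∑ i, (v i * b i - v i * ∑ j, a i j * xk j) ^ 2)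
        - ∑ i, φ ((b i - ∑ j, a i j * xk j) ^ 2)) :
    ∀ x : Fin n → ℝ,
      (∑ i, (v i * (∑ j, a i j * x j) - v i * b i) ^ 2) ≤ σk →
      ∑ i, φ ((b i - ∑ j, a i j * x j) ^ 2) ≤ σ := by
  intro x hx
  set t : Fin m → ℝ := fun i => (b i - ∑ j, a i j * xk j) ^ 2 with ht
  set s : Fin m → ℝ := fun i => (b i - ∑ j, a i j * x j) ^ 2 with hs
  have hv2 : ∀ i, v i ^ 2 = D (t i) := fun i => by
    rw [hv i, Real.sq_sqrt (hDnonneg _ (Set.mem_Ici.2 (sq_nonneg _)))]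
  have key : ∀ i ∈ Finset.univ, φ (s i) ≤ φ (t i) + v i ^ 2 * (s i - t i) := by
    intro i _
    rw [hv2 i]
    exact concave_majorization φ D hconc hderiv (sq_nonneg _) (sq_nonneg _)
  have hsum : ∑ i, φ (s i) ≤ ∑ i, (φ (t i) + v i ^ 2 * (s i - t i)) :=
    Finset.sum_le_sum key
  have hsplit : ∑ i, (φ (t i) + v i ^ 2 * (s i - t i))
      = ∑ i, φ (t i) + ∑ i, (v i * (∑ j, a i j * x j) - v i * b i) ^ 2
        - ∑ i, (v i * b i - v i * ∑ j, a i j * xk j) ^ 2 := by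
    rw [Finset.sum_add_distrib]
    have h2 : ∑ i, v i ^ 2 * (s i - t i)
        = ∑ i, ((v i * (∑ j, a i j * x j) - v i * b i) ^ 2
          - (v i * b i - v i * ∑ j, a i j * xk j) ^ 2) := by
      apply Finset.sum_congr rfl
      intro i _
      simp only [ht, hs]
      ring
    rw [h2, Finset.sum_sub_distrib]
    ring
  rw [hsplit] at hsum
  linarith
end
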